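/- With A SPD, B ∈ ℝ^{m×n}, Ŝ SPD, and S = BA⁻¹Bᵀ, suppose Ŝ⁻¹S is diagonalizable: Ŝ⁻¹S X = XΛ with X = [X₁, X₂], Λ = blkdiag(I, Λ₂), where X₁ spans the eigenspace for eigenvalue 1. Then the matrix T = [[I, A⁻¹Bᵀ(I − Ŝ⁻¹S)],[0, Ŝ⁻¹S]] admits the eigendecomposition T = Q·blkdiag(I, I, Λ₂)·Q⁻¹ with Q = [[I, 0, −A⁻¹BᵀX₂],[0, X₁, X₂]]. -/

import Mathlib

open Matrix

theorem stmt15 {n k l : ℕ} (A : Matrix (Fin n) (Fin n) ℝ)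
    (B : Matrix (Fin k ⊕ Fin l) (Fin n) ℝ)
    (Shat : Matrix (Fin k ⊕ Fin l) (Fin k ⊕ Fin l) ℝ)
    (X₁ : Matrix (Fin k ⊕ Fin l) (Fin k) ℝ)
    (X₂ : Matrix (Fin k ⊕ Fin l) (Fin l) ℝ)
    (Λ₂ : Matrix (Fin l) (Fin l) ℝ)
    (hA : A.PosDef) (hS : Shat.PosDef)
    (hX : (fromCols X₁ X₂)ᵀ * Shat * fromCols X₁ X₂ = 1)
    (heig : Shat⁻¹ * (B * A⁻¹ * Bᵀ) * fromCols X₁ X₂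
      = fromCols X₁ X₂ * fromBlocks 1 0 0 Λ₂) :
    let S := B * A⁻¹ * Bᵀ
    let T := fromBlocks 1 (A⁻¹ * Bᵀ * (1 - Shat⁻¹ * S)) 0 (Shat⁻¹ * S)
    let Q := fromBlocks 1 (fromCols 0 (-(A⁻¹ * Bᵀ * X₂))) 0 (fromCols X₁ X₂)
    IsUnit Q ∧ T = Q * fromBlocks 1 0 0 (fromBlocks 1 0 0 Λ₂) * Q⁻¹ := by
  intro S T Q
  have hM : IsUnit (fromCols X₁ X₂).det :=
    Matrix.isUnit_det_of_left_inverse hX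
  have hQ : IsUnit Q := by
    rw [Matrix.isUnit_iff_isUnit_det]
    show IsUnit (fromBlocks _ _ _ _).det
    rw [Matrix.det_fromBlocks_zero₂₁, Matrix.det_one, one_mul]
    exact hM
  refine ⟨hQ, ?_⟩
  haveI : Invertible Q := hQ.invertible
  refine ((Matrix.mul_inv_eq_iff_eq_mul_of_invertible Q _ _).mpr ?_).symm
  show Q * fromBlocks 1 0 0 (fromBlocks 1 0 0 Λ₂) = T * Q
  have hP : (Shat⁻¹ * S) * fromCols X₁ X₂ = fromCols X₁ X₂ * fromBlocks 1 0 0 Λ₂ := heig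
  show fromBlocks 1 (fromCols 0 (-(A⁻¹ * Bᵀ * X₂))) 0 (fromCols X₁ X₂) *
      fromBlocks 1 0 0 (fromBlocks 1 0 0 Λ₂) =
    fromBlocks 1 (A⁻¹ * Bᵀ * (1 - Shat⁻¹ * S)) 0 (Shat⁻¹ * S) *
      fromBlocks 1 (fromCols 0 (-(A⁻¹ * Bᵀ * X₂))) 0 (fromCols X₁ X₂)
  rw [Matrix.fromBlocks_multiply, Matrix.fromBlocks_multiply]
  have hP' : (Shat⁻¹ * S * X₁).fromCols (Shat⁻¹ * S * X₂)
      = fromCols X₁ (X₂ * Λ₂) := by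
    rw [← Matrix.mul_fromCols, hP, Matrix.fromCols_mul_fromBlocks]
    simp
  obtain ⟨hP1, hP2⟩ := (Matrix.fromCols_ext_iff _ _ _ _).mp hP'
  simp only [Matrix.mul_assoc] at hP1 hP2
  simp only [Matrix.mul_fromCols, Matrix.fromCols_mul_fromBlocks,
    Matrix.sub_mul, Matrix.mul_sub, Matrix.mul_assoc, hP1, hP2,
    Matrix.one_mul, Matrix.mul_one, Matrix.mul_zero, Matrix.zero_mul,
    add_zero, zero_add]
  ext (i | i) (j | j | j) <;>
    simp [Matrix.fromBlocks, Matrix.fromCols, Matrix.mul_assoc, mul_comm] <;> ring
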